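/- Let p be a prime, t, n ∈ ℤ_p, ϑ ∈ ℤ_p with ϑ² = t·ϑ − n, ϑ̄ := t − ϑ, and assume δ := ϑ − ϑ̄ is a unit of ℤ_p. Fix s ∈ ℕ and, viewing all elements in ℚ_p, let M be the 2×2 matrix over ℚ_p with rows (t, −n) and (1, 0), and set ξ := δ⁻¹ · P · T where P has rows (ϑ, ϑ̄), (1, 1) and T has rows (p^s, 1), (0, 1). Then for all a, b ∈ ℚ_p: every entry of ξ⁻¹ · (a·1 + b·M) · ξ lies in ℤ_p if and only if a ∈ ℤ_p and b ∈ p^s·ℤ_p. -/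

import Mathlib

open Matrix

set_option maxHeartbeats 2000000 in
/-- Let `ϑ ∈ ℤ_p` satisfy `ϑ² = tϑ - n` with `δ = ϑ - ϑ̄` a unit of `ℤ_p`
(where `ϑ̄ = t - ϑ`), and let `ξ = δ⁻¹·(ϑ, ϑ̄; 1, 1)·(pˢ, 1; 0, 1)` over `ℚ_p`. Then all
entries of `ξ⁻¹(a·1 + b·M)ξ` are `p`-adic integers iff `a ∈ ℤ_p` and `b ∈ pˢℤ_p`
(membership expressed via the `p`-adic norm). -/
theorem optimal_embedding_split (p : ℕ) [Fact p.Prime] (t n ϑ ϑbar δ : ℤ_[p])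
    (hϑ : ϑ ^ 2 = t * ϑ - n) (hϑbar : ϑbar = t - ϑ) (hδ : δ = ϑ - ϑbar)
    (hδu : IsUnit δ) (s : ℕ)
    (M ξ : Matrix (Fin 2) (Fin 2) ℚ_[p])
    (hM : M = !![(t : ℚ_[p]), -(n : ℚ_[p]); 1, 0])
    (hξ : ξ = ((δ : ℚ_[p]))⁻¹ •
      (!![(ϑ : ℚ_[p]), (ϑbar : ℚ_[p]); 1, 1] * !![((p : ℚ_[p])) ^ s, 1; 0, 1])) :
    ∀ a b : ℚ_[p],
      (∀ i j : Fin 2,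
          ‖(ξ⁻¹ * (a • (1 : Matrix (Fin 2) (Fin 2) ℚ_[p]) + b • M) * ξ) i j‖ ≤ 1) ↔
        (‖a‖ ≤ 1 ∧ ‖b‖ ≤ ‖((p : ℚ_[p])) ^ s‖) := by
  intro a b
  have hp0 : ((p : ℚ_[p])) ≠ 0 := Nat.cast_ne_zero.2 (Fact.out : p.Prime).pos.ne'
  have hps : ((p : ℚ_[p])) ^ s ≠ 0 := pow_ne_zero _ hp0
  have hδnorm : ‖δ‖ = 1 := PadicInt.isUnit_iff.mp hδu
  have hδ0 : ((δ : ℚ_[p])) ≠ 0 := by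
    intro h
    rw [PadicInt.coe_eq_zero] at h
    simp [h] at hδnorm
  have hδQ : (ϑ : ℚ_[p]) - ((t : ℚ_[p]) - (ϑ : ℚ_[p])) ≠ 0 := by
    have h2 : ((δ : ℚ_[p])) = (ϑ : ℚ_[p]) - ((t : ℚ_[p]) - (ϑ : ℚ_[p])) := by
      rw [hδ, hϑbar]; push_cast; ring
    rwa [h2] at hδ0
  have hn : ((n : ℚ_[p])) = (t : ℚ_[p]) * (ϑ : ℚ_[p]) - (ϑ : ℚ_[p]) ^ 2 := by
    have h3 := congrArg (fun z : ℤ_[p] => (z : ℚ_[p])) hϑ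
    push_cast at h3
    linear_combination h3
  set η : Matrix (Fin 2) (Fin 2) ℚ_[p] :=
    !![2 / (p : ℚ_[p]) ^ s, -(((ϑ : ℚ_[p]) + (ϑbar : ℚ_[p])) / (p : ℚ_[p]) ^ s);
       -1, (ϑ : ℚ_[p])] with hη
  have hξη : ξ * η = 1 := by
    subst hξ hδ hϑbar
    ext i j
    fin_cases i <;> fin_cases j <;>
      · simp [hη, Matrix.mul_apply, Fin.sum_univ_succ, Matrix.one_apply, Matrix.smul_apply]
        push_cast
        field_simp
        ring
  have hinv : ξ⁻¹ = η := Matrix.inv_eq_right_inv hξη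
  have key : ξ⁻¹ * (a • (1 : Matrix (Fin 2) (Fin 2) ℚ_[p]) + b • M) * ξ =
      !![a + b * (ϑ : ℚ_[p]), b * (δ : ℚ_[p]) / (p : ℚ_[p]) ^ s;
         0, a + b * (ϑbar : ℚ_[p])] := by
    rw [hinv]
    have hA : a • (1 : Matrix (Fin 2) (Fin 2) ℚ_[p]) + b • M =
        !![a + b * (t : ℚ_[p]), -(b * (n : ℚ_[p])); b, a] := by
      subst hM
      ext i j
      fin_cases i <;> fin_cases j <;>
        simp [Matrix.one_apply] <;> ring
    rw [hA]
    subst hξ hδ hϑbar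
    ext i j
    fin_cases i <;> fin_cases j <;>
      · simp [hη, Matrix.mul_apply, Fin.sum_univ_succ, Matrix.one_apply, Matrix.smul_apply]
        push_cast [hn]
        field_simp
        ring
  rw [key]
  have hcoe : ∀ z : ℤ_[p], ‖(z : ℚ_[p])‖ = ‖z‖ := fun z => PadicInt.padic_norm_e_of_padicInt z
  have hpsle : ‖((p : ℚ_[p])) ^ s‖ ≤ 1 := by
    rw [norm_pow]
    exact pow_le_one₀ (norm_nonneg _) (le_of_lt Padic.norm_p_lt_one)
  have hpspos : (0:ℝ) < ‖((p : ℚ_[p])) ^ s‖ := norm_pos_iff.2 hps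
  have hϑle : ‖((ϑ : ℚ_[p]))‖ ≤ 1 := by rw [hcoe]; exact ϑ.2
  have hϑble : ‖((ϑbar : ℚ_[p]))‖ ≤ 1 := by rw [hcoe]; exact ϑbar.2
  have hδQnorm : ‖((δ : ℚ_[p]))‖ = 1 := by rw [hcoe]; exact hδnorm
  have hmid : ‖b * (δ : ℚ_[p]) / (p : ℚ_[p]) ^ s‖ = ‖b‖ / ‖((p : ℚ_[p])) ^ s‖ := by
    rw [norm_div, norm_mul, hδQnorm, mul_one]
  constructor
  · intro h
    have hb : ‖b‖ ≤ ‖((p : ℚ_[p])) ^ s‖ := by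
      have h01 : ‖b * (δ : ℚ_[p]) / (p : ℚ_[p]) ^ s‖ ≤ 1 := by simpa using h 0 1
      rwa [hmid, div_le_one hpspos] at h01
    refine ⟨?_, hb⟩
    have h00 : ‖a + b * (ϑ : ℚ_[p])‖ ≤ 1 := by simpa using h 0 0
    have hbϑ : ‖b * (ϑ : ℚ_[p])‖ ≤ 1 := by
      rw [norm_mul]
      calc ‖b‖ * ‖((ϑ : ℚ_[p]))‖ ≤ 1 * 1 :=
            mul_le_mul (hb.trans hpsle) hϑle (norm_nonneg _) zero_le_one
        _ = 1 := one_mul 1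
    calc ‖a‖ = ‖(a + b * (ϑ : ℚ_[p])) + (-(b * (ϑ : ℚ_[p])))‖ := by ring_nf
      _ ≤ max ‖a + b * (ϑ : ℚ_[p])‖ ‖-(b * (ϑ : ℚ_[p]))‖ := Padic.nonarchimedean _ _
      _ ≤ 1 := max_le h00 (by rwa [norm_neg])
  · rintro ⟨ha, hb⟩ i j
    have hbϑ : ∀ z : ℤ_[p], ‖b * (z : ℚ_[p])‖ ≤ 1 := by
      intro z
      rw [norm_mul]
      calc ‖b‖ * ‖((z : ℚ_[p]))‖ ≤ 1 * 1 := by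
            refine mul_le_mul (hb.trans hpsle) ?_ (norm_nonneg _) zero_le_one
            rw [hcoe]; exact z.2
        _ = 1 := one_mul 1
    have hsum : ∀ z : ℤ_[p], ‖a + b * (z : ℚ_[p])‖ ≤ 1 := fun z =>
      le_trans (Padic.nonarchimedean _ _) (max_le ha (hbϑ z))
    fin_cases i <;> fin_cases j
    · simpa using hsum ϑ
    · have hx : ‖b * (δ : ℚ_[p]) / (p : ℚ_[p]) ^ s‖ ≤ 1 := by
        rw [hmid, div_le_one hpspos]; exact hb
      simpa using hx
    · simp
    · simpa using hsum ϑbar
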